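/- (Proposition 4.2.) Let p be a prime, let m, n ≥ 1, let φ : F_n → Aut(ℤ/pℤ) be a nontrivial homomorphism (φ(f) ≠ id for some f ∈ F_n), and let A = ℤ/pℤ ⋊_φ F_n. Let i, j : F_m → F_n be injective homomorphisms, let ĩ = inr ∘ i and j̃ = inr ∘ j : F_m → A, and let Γ = A *_{F_m} A be the pushout of ĩ and j̃ with canonical maps of₁, of₂ : A → Γ. Suppose that the subgroup Λ of Γ generated by the images of₁(inr(F_n)) ∪ of₂(inr(F_n)) of the two canonical copies of F_n is infinite and is simple as a group. Then Γ is not virtually torsion-free: there is no finite-index subgroup H of Γ such that every element of H of finite order is trivial. -/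

import Mathlib

universe u

/-- The two-element family of groups `G₁, G₂`, indexed by `Bool`. -/
abbrev fam2 (G₁ G₂ : Type u) : Bool → Type u := fun b => bif b then G₁ else G₂

instance fam2Group (G₁ G₂ : Type u) [g₁ : Group G₁] [g₂ : Group G₂] :
    ∀ b, Group (fam2 G₁ G₂ b)
  | true => g₁
  | false => g₂

/-- A pair of homomorphisms `φ₁ : K →* G₁`, `φ₂ : K →* G₂` as a `Bool`-indexed family,
so that `Monoid.PushoutI (fam2Hom φ₁ φ₂)` is the pushout `G₁ *_K G₂`. -/
def fam2Hom {K G₁ G₂ : Type u} [Group K] [Group G₁] [Group G₂]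
    (φ₁ : K →* G₁) (φ₂ : K →* G₂) : ∀ b, K →* fam2 G₁ G₂ b
  | true => φ₁
  | false => φ₂

/-- (Proposition 4.2.)  Let `A = ℤ/pℤ ⋊[φ] F_n` with `φ` nontrivial, and let
`Γ = A *_{F_m} A` be the pushout of `ĩ = inr ∘ i` and `j̃ = inr ∘ j` for injective
`i, j : F_m →* F_n`.  If the subgroup `Λ` of `Γ` generated by the two canonical copies of
`F_n` is infinite and simple, then `Γ` is not virtually torsion-free. -/
theorem pushout_semidirect_not_virtually_torsionFree
    (p m n : ℕ) (hp : p.Prime) (hm : 1 ≤ m) (hn : 1 ≤ n)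
    (φ : FreeGroup (Fin n) →* MulAut (Multiplicative (ZMod p)))
    (hφ : ∃ f : FreeGroup (Fin n), φ f ≠ 1)
    (i j : FreeGroup (Fin m) →* FreeGroup (Fin n))
    (hi : Function.Injective i) (hj : Function.Injective j)
    (Λ : Subgroup (Monoid.PushoutI
          (fam2Hom
            ((SemidirectProduct.inr :
                FreeGroup (Fin n) →* Multiplicative (ZMod p) ⋊[φ] FreeGroup (Fin n)).comp i)
            ((SemidirectProduct.inr :
                FreeGroup (Fin n) →* Multiplicative (ZMod p) ⋊[φ] FreeGroup (Fin n)).comp j))))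
    (hΛ : Λ = Subgroup.closure
        (Set.range ((Monoid.PushoutI.of
            (φ := fam2Hom (SemidirectProduct.inr.comp i) (SemidirectProduct.inr.comp j))
            true).comp
          (SemidirectProduct.inr :
            FreeGroup (Fin n) →* Multiplicative (ZMod p) ⋊[φ] FreeGroup (Fin n))) ∪
         Set.range ((Monoid.PushoutI.of
            (φ := fam2Hom (SemidirectProduct.inr.comp i) (SemidirectProduct.inr.comp j))
            false).comp
          (SemidirectProduct.inr :
            FreeGroup (Fin n) →* Multiplicative (ZMod p) ⋊[φ] FreeGroup (Fin n)))))
    (hinf : Infinite Λ) (hsimple : IsSimpleGroup Λ) :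
    ¬ ∃ H : Subgroup (Monoid.PushoutI
          (fam2Hom
            ((SemidirectProduct.inr :
                FreeGroup (Fin n) →* Multiplicative (ZMod p) ⋊[φ] FreeGroup (Fin n)).comp i)
            ((SemidirectProduct.inr :
                FreeGroup (Fin n) →* Multiplicative (ZMod p) ⋊[φ] FreeGroup (Fin n)).comp j))),
      H.FiniteIndex ∧ ∀ h, h ∈ H → IsOfFinOrder h → h = 1 := by
  rintro ⟨H0, hHfi, hHtf⟩
  haveI : NeZero p := ⟨hp.ne_zero⟩
  -- injectivity of the diagram maps
  have hinj : ∀ b, Function.Injective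
      ((fam2Hom
        ((SemidirectProduct.inr :
            FreeGroup (Fin n) →* Multiplicative (ZMod p) ⋊[φ] FreeGroup (Fin n)).comp i)
        ((SemidirectProduct.inr :
            FreeGroup (Fin n) →* Multiplicative (ZMod p) ⋊[φ] FreeGroup (Fin n)).comp j)) b) := by
    intro b
    cases b
    · exact SemidirectProduct.inr_injective.comp hj
    · exact SemidirectProduct.inr_injective.comp hi
  have hofinj := Monoid.PushoutI.of_injective hinj true
  haveI := hHfi
  haveI : H0.normalCore.FiniteIndex := Subgroup.finiteIndex_normalCore H0
  have hNnorm : H0.normalCore.Normal := Subgroup.normalCore_normal H0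
  haveI : (H0.normalCore.subgroupOf Λ).FiniteIndex :=
    Subgroup.instFiniteIndex_subgroupOf H0.normalCore Λ
  have hΛN : Λ ≤ H0.normalCore := by
    rcases hsimple.eq_bot_or_eq_top_of_normal (H0.normalCore.subgroupOf Λ)
        (hNnorm.subgroupOf Λ) with hb | ht
    · exfalso
      have h0 : (H0.normalCore.subgroupOf Λ).index = 0 := by
        rw [hb, Subgroup.index_bot, Nat.card_eq_zero_of_infinite]
      exact (Subgroup.instFiniteIndex_subgroupOf H0.normalCore Λ).index_ne_zero h0
    · exact Subgroup.subgroupOf_eq_top.mp ht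
  -- an element moved nontrivially by φ
  obtain ⟨f, hf⟩ := hφ
  have ha : ∃ a : Multiplicative (ZMod p), φ f a ≠ a := by
    by_contra h
    push_neg at h
    exact hf (by ext a; exact h a)
  obtain ⟨a, ha⟩ := ha
  obtain ⟨of1, hof1⟩ : ∃ g, g = (Monoid.PushoutI.of
      (φ := fam2Hom
        ((SemidirectProduct.inr :
            FreeGroup (Fin n) →* Multiplicative (ZMod p) ⋊[φ] FreeGroup (Fin n)).comp i)
        ((SemidirectProduct.inr :
            FreeGroup (Fin n) →* Multiplicative (ZMod p) ⋊[φ] FreeGroup (Fin n)).comp j))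
      true) := ⟨_, rfl⟩
  rw [← hof1] at hofinj hΛ
  have hxΛ : of1 (SemidirectProduct.inr f) ∈ Λ := by
    rw [hΛ]
    exact Subgroup.subset_closure (Or.inl ⟨f, rfl⟩)
  have hc1 : a * ((φ f) a)⁻¹ ≠ 1 := by
    simp only [ne_eq, mul_inv_eq_one]
    exact fun h => ha h.symm
  have hkey : SemidirectProduct.inl a * SemidirectProduct.inr f *
      (SemidirectProduct.inl a)⁻¹ * (SemidirectProduct.inr f)⁻¹ =
      (SemidirectProduct.inl (a * ((φ f) a)⁻¹) :
        Multiplicative (ZMod p) ⋊[φ] FreeGroup (Fin n)) := by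
    rw [← map_inv SemidirectProduct.inl a, ← map_inv SemidirectProduct.inr f,
      mul_assoc, mul_assoc, ← mul_assoc (SemidirectProduct.inr f),
      ← SemidirectProduct.inl_aut, ← map_mul, map_inv]
  have htof : of1 (SemidirectProduct.inl a) * of1 (SemidirectProduct.inr f) *
      (of1 (SemidirectProduct.inl a))⁻¹ * (of1 (SemidirectProduct.inr f))⁻¹ =
      of1 (SemidirectProduct.inl (a * ((φ f) a)⁻¹)) := by
    rw [← map_inv of1, ← map_inv of1, ← map_mul, ← map_mul, ← map_mul, hkey]
  have htN : of1 (SemidirectProduct.inl a) * of1 (SemidirectProduct.inr f) *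
      (of1 (SemidirectProduct.inl a))⁻¹ * (of1 (SemidirectProduct.inr f))⁻¹ ∈ H0.normalCore := by
    have hxN : of1 (SemidirectProduct.inr f) ∈ H0.normalCore := hΛN hxΛ
    exact mul_mem (hNnorm.conj_mem _ hxN _) (inv_mem hxN)
  have htfin : IsOfFinOrder (of1 (SemidirectProduct.inl (a * ((φ f) a)⁻¹))) :=
    (of1.comp SemidirectProduct.inl).isOfFinOrder (isOfFinOrder_of_finite _)
  have ht1 : of1 (SemidirectProduct.inl (a * ((φ f) a)⁻¹)) = 1 := by
    rw [← htof] at htfin ⊢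
    exact hHtf _ (H0.normalCore_le htN) htfin
  apply hc1
  apply SemidirectProduct.inl_injective (φ := φ)
  apply hofinj
  rw [ht1, map_one, map_one]
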